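/- Let E be a real inner product space and let 0 < m ≤ L be real numbers. For any vectors e, g ∈ E, the following are equivalent: (i) (L + m)·⟨e, g⟩ ≥ m·L·‖e‖² + ‖g‖²; (ii) ‖g − ((L + m)/2)·e‖ ≤ ((L − m)/2)·‖e‖. -/
import Mathlib


open RealInnerProductSpace

/-- The sector-bound condition `(L + m) ⟪e, g⟫ ≥ m L ‖e‖² + ‖g‖²` is equivalent to the
disk condition `‖g − ((L + m)/2) e‖ ≤ ((L − m)/2) ‖e‖`. -/
theorem sector_bound_iff_disk
    {E : Type*} [NormedAddCommGroup E] [InnerProductSpace ℝ E]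
    (m L : ℝ) (hm : 0 < m) (hmL : m ≤ L) (e g : E) :
    (L + m) * ⟪e, g⟫ ≥ m * L * ‖e‖ ^ 2 + ‖g‖ ^ 2 ↔
      ‖g - ((L + m) / 2) • e‖ ≤ ((L - m) / 2) * ‖e‖ := by
  have hr : (0:ℝ) ≤ ((L - m) / 2) * ‖e‖ := mul_nonneg (by linarith) (norm_nonneg _)
  have hsq : ‖g - ((L + m) / 2) • e‖ ≤ ((L - m) / 2) * ‖e‖ ↔
      ‖g - ((L + m) / 2) • e‖ ^ 2 ≤ (((L - m) / 2) * ‖e‖) ^ 2 :=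
    (pow_le_pow_iff_left₀ (norm_nonneg _) hr (by norm_num)).symm
  have hexp : ‖g - ((L + m) / 2) • e‖ ^ 2
      = ‖g‖ ^ 2 - (L + m) * ⟪e, g⟫ + ((L + m) / 2) ^ 2 * ‖e‖ ^ 2 := by
    rw [norm_sub_sq_real, norm_smul, real_inner_smul_right, real_inner_comm]
    rw [Real.norm_of_nonneg (by linarith : (0:ℝ) ≤ (L + m)/2)]
    ring
  rw [hsq, hexp]
  constructor <;> intro h <;> nlinarith [sq_nonneg ‖e‖]
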